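/- For a finite simple graph G on M vertices with vertex set V, the derivative of the GBS polynomial satisfies d/dx GBS_G(x) = Σ_{v ∈ V} GBS_{G∖{v}}(x), where G∖{v} is G with vertex v and all incident edges removed. -/
import Mathlib


open Finset Polynomial

/-- The hafnian of an `n × n` matrix: `(1/((n/2)! 2^(n/2))) ∑_{σ} ∏_j A_{σ(2j), σ(2j+1)}`,
taken to be `0` when `n` is odd and `1` for the empty matrix. -/
noncomputable def haf {F : Type*} [Field F] {n : ℕ} (A : Matrix (Fin n) (Fin n) F) : F :=
  if h : 2 ∣ n then
    (((n / 2).factorial * 2 ^ (n / 2) : ℕ) : F)⁻¹ *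
      ∑ σ : Equiv.Perm (Fin n), ∏ j : Fin (n / 2),
        A (σ ⟨2 * j.1, by have h1 := Nat.div_mul_cancel h; have h2 := j.isLt; omega⟩)
          (σ ⟨2 * j.1 + 1, by have h1 := Nat.div_mul_cancel h; have h2 := j.isLt; omega⟩)
  else 0

/-- The principal submatrix of `A` indexed by the subset `S` of the rows/columns. -/
def subm {F : Type*} {M : ℕ} (A : Matrix (Fin M) (Fin M) F) (S : Finset (Fin M)) :
    Matrix (Fin S.card) (Fin S.card) F :=
  fun i j => A (S.orderEmbOfFin rfl i) (S.orderEmbOfFin rfl j)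

/-- The GBS polynomial `∑_{S ⊆ V} (-1)^{|S|/2} haf(A_S)² x^{M-|S|}`. -/
noncomputable def GBS {F : Type*} [Field F] {M : ℕ} (A : Matrix (Fin M) (Fin M) F) :
    Polynomial F :=
  ∑ S : Finset (Fin M),
    Polynomial.C ((-1 : F) ^ (S.card / 2) * (haf (subm A S)) ^ 2) * Polynomial.X ^ (M - S.card)

/-- The signless GBS polynomial `∑_{S ⊆ V} haf(A_S)² x^{M-|S|}`. -/
noncomputable def GBSplus {F : Type*} [Field F] {M : ℕ} (A : Matrix (Fin M) (Fin M) F) :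
    Polynomial F :=
  ∑ S : Finset (Fin M), Polynomial.C ((haf (subm A S)) ^ 2) * Polynomial.X ^ (M - S.card)

/-- The signless matching polynomial `μ⁺(A, z) = ∑_{T} haf(A_{T,T}) z^{M-|T|}`. -/
noncomputable def muPlus {F : Type*} [Field F] {M : ℕ} (A : Matrix (Fin M) (Fin M) F) :
    Polynomial F :=
  ∑ S : Finset (Fin M), Polynomial.C (haf (subm A S)) * Polynomial.X ^ (M - S.card)

/-- The (signed) matching polynomial `μ(A, z) = ∑_{T} (-1)^{|T|/2} haf(A_{T,T}) z^{M-|T|}`. -/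
noncomputable def matchPoly {F : Type*} [Field F] {M : ℕ} (A : Matrix (Fin M) (Fin M) F) :
    Polynomial F :=
  ∑ S : Finset (Fin M),
    Polynomial.C ((-1 : F) ^ (S.card / 2) * haf (subm A S)) * Polynomial.X ^ (M - S.card)

/-- The adjacency matrix `[[A, xI],[xI, A]]` of the prism `G □ P₂(x)` over the graph
with adjacency matrix `A`. -/
noncomputable def prism {F : Type*} [Field F] {M : ℕ} (A : Matrix (Fin M) (Fin M) F) (x : F) :
    Matrix (Fin (M + M)) (Fin (M + M)) F :=
  Matrix.submatrix (Matrix.fromBlocks A (x • 1) (x • 1) A) finSumFinEquiv.symm finSumFinEquiv.symm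

/-- The adjacency matrix `A₁ ⊕ A₂` of the disjoint union of two graphs. -/
def dsum {F : Type*} [Zero F] {M N : ℕ} (A : Matrix (Fin M) (Fin M) F)
    (B : Matrix (Fin N) (Fin N) F) : Matrix (Fin (M + N)) (Fin (M + N)) F :=
  Matrix.submatrix (Matrix.fromBlocks A 0 0 B) finSumFinEquiv.symm finSumFinEquiv.symm

lemma haf_cast {F : Type*} [Field F] {n m : ℕ} (h : n = m) (A : Matrix (Fin m) (Fin m) F) :
    haf (fun i j => A (Fin.cast h i) (Fin.cast h j)) = haf A := by subst h; rfl

lemma orderEmbOfFin_cast' {α : Type*} [LinearOrder α] {s : Finset α} {k k' : ℕ}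
    (h : s.card = k) (h' : s.card = k') (i : Fin k) :
    s.orderEmbOfFin h i = s.orderEmbOfFin h' (Fin.cast (h.symm.trans h') i) := by
  subst h h'; rfl

lemma orderEmbOfFin_map {M : ℕ} (S : Finset (Fin M)) (T : Finset (Fin S.card)) (i : Fin T.card) :
    (T.map (S.orderEmbOfFin rfl).toEmbedding).orderEmbOfFin (Finset.card_map _) i
      = S.orderEmbOfFin rfl (T.orderEmbOfFin rfl i) := by
  have h := Finset.orderEmbOfFin_unique' (s := T.map (S.orderEmbOfFin rfl).toEmbedding)
      (h := Finset.card_map _) (f := (T.orderEmbOfFin rfl).trans (S.orderEmbOfFin rfl))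
      (fun x => Finset.mem_map.2 ⟨_, Finset.orderEmbOfFin_mem _ _ _, rfl⟩)
  exact (congrArg (fun f => f i) (congrArg DFunLike.coe h)).symm

lemma haf_subm_subm {F : Type*} [Field F] {M : ℕ} (A : Matrix (Fin M) (Fin M) F)
    (S : Finset (Fin M)) (T : Finset (Fin S.card)) :
    haf (subm (subm A S) T) = haf (subm A (T.map (S.orderEmbOfFin rfl).toEmbedding)) := by
  set S' := T.map (S.orderEmbOfFin rfl).toEmbedding with hS'
  have hc : T.card = S'.card := (Finset.card_map _).symm
  rw [← haf_cast hc (subm A S')]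
  congr 1
  funext i j
  show A (S.orderEmbOfFin rfl (T.orderEmbOfFin rfl i)) (S.orderEmbOfFin rfl (T.orderEmbOfFin rfl j))
    = A (S'.orderEmbOfFin rfl (Fin.cast hc i)) (S'.orderEmbOfFin rfl (Fin.cast hc j))
  have key : ∀ k : Fin T.card,
      S'.orderEmbOfFin rfl (Fin.cast hc k) = S.orderEmbOfFin rfl (T.orderEmbOfFin rfl k) := by
    intro k
    rw [← orderEmbOfFin_map S T k]
    rw [orderEmbOfFin_cast' (Finset.card_map _) rfl k]
  rw [key i, key j]


/-- The derivative of the GBS polynomial is the sum of the GBS polynomials of the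
vertex-deleted subgraphs. -/
theorem gbs_derivative {M : ℕ} (G : SimpleGraph (Fin M)) [DecidableRel G.Adj] :
    Polynomial.derivative (GBS (G.adjMatrix ℝ)) =
      ∑ v : Fin M, GBS (subm (G.adjMatrix ℝ) ({v}ᶜ : Finset (Fin M))) := by
  classical
  set A := G.adjMatrix ℝ with hA
  -- abbreviation for the coefficient
  set c : Finset (Fin M) → ℝ := fun S => (-1 : ℝ) ^ (S.card / 2) * (haf (subm A S)) ^ 2 with hc
  -- LHS
  have lhs : Polynomial.derivative (GBS A)
      = ∑ S : Finset (Fin M), (M - S.card) • (C (c S) * X ^ (M - S.card - 1)) := by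
    rw [GBS, map_sum]
    refine Finset.sum_congr rfl fun S _ => ?_
    rw [derivative_C_mul_X_pow]
    rw [nsmul_eq_mul, mul_comm (c S), C_mul, C_eq_natCast, mul_assoc]
  -- RHS: transform each vertex-deleted GBS
  have rhs1 : ∀ v : Fin M, GBS (subm A ({v}ᶜ : Finset (Fin M)))
      = ∑ S ∈ ({v}ᶜ : Finset (Fin M)).powerset, C (c S) * X ^ (M - S.card - 1) := by
    intro v
    rw [GBS]
    set f := (({v}ᶜ : Finset (Fin M)).orderEmbOfFin rfl).toEmbedding with hf
    have hrange : ∀ x : Fin (({v}ᶜ : Finset (Fin M)).card), f x ∈ ({v}ᶜ : Finset (Fin M)) :=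
      fun x => Finset.orderEmbOfFin_mem _ _ _
    refine Finset.sum_bij' (fun T _ => T.map f)
      (fun S hS => S.preimage f f.injective.injOn) ?_ ?_ ?_ ?_ ?_
    · intro T _
      rw [Finset.mem_powerset]
      intro x hx
      obtain ⟨y, _, rfl⟩ := Finset.mem_map.1 hx
      exact hrange y
    · intro S _; exact Finset.mem_univ _
    · intro T _; exact Finset.preimage_map f T
    · intro S hS
      rw [Finset.mem_powerset] at hS
      ext x
      simp only [Finset.mem_map, Finset.mem_preimage]
      constructor
      · rintro ⟨y, hy, rfl⟩; exact hy
      · intro hx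
        have : x ∈ Set.range f := by
          rw [hf]
          show x ∈ Set.range (({v}ᶜ : Finset (Fin M)).orderEmbOfFin rfl)
          rw [Finset.range_orderEmbOfFin]
          exact hS hx
        obtain ⟨y, rfl⟩ := this
        exact ⟨y, hx, rfl⟩
    · intro T _
      have hcard : (T.map f).card = T.card := Finset.card_map _
      have hhaf : haf (subm (subm A ({v}ᶜ : Finset (Fin M))) T) = haf (subm A (T.map f)) :=
        haf_subm_subm A _ T
      have hn : ({v}ᶜ : Finset (Fin M)).card = M - 1 := by
        rw [Finset.card_compl, Finset.card_singleton, Fintype.card_fin]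
      rw [hc]
      simp only [hcard, hhaf, hn]
      rw [show M - 1 - T.card = M - T.card - 1 from by omega]
  rw [lhs, Finset.sum_congr rfl (fun v _ => rhs1 v)]
  -- swap the order of summation
  rw [Finset.sum_comm' (s := Finset.univ) (t := fun v => ({v}ᶜ : Finset (Fin M)).powerset)
    (t' := Finset.univ) (s' := fun S => Sᶜ)
    (h := by
      intro v S
      simp only [Finset.mem_univ, true_and, and_true, Finset.mem_powerset, Finset.mem_compl]
      constructor
      · intro h hv; exact Finset.mem_compl.1 (h hv) (Finset.mem_singleton_self v)
      · intro h x hx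
        rw [Finset.mem_compl, Finset.mem_singleton]
        rintro rfl; exact h hx)]
  refine Finset.sum_congr rfl fun S _ => ?_
  rw [Finset.sum_const, Finset.card_compl, Fintype.card_fin]
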